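/- Let A be a k-linear Hopf category with object class X, and let M be a Hopf module over A. Then for all x, y ∈ X, the k-linear map M^{co}_x ⊗_k A_{x,y} → M_{x,y} determined by m ⊗ a ↦ ma is bijective, with inverse given by m ↦ m_[0] S_{x,y}(m_[1]) ⊗ m_[2] (where m_[0] ⊗ m_[1] ⊗ m_[2] denotes the twofold coaction of m ∈ M_{x,y}). -/

import Mathlib

open TensorProduct

/-- The submodule of coinvariants of a Hopf module. -/
noncomputable def coinv {k : Type*} [CommRing k] {Mxx Axx : Type*}
    [AddCommGroup Mxx] [Module k Mxx] [AddCommGroup Axx] [Module k Axx]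
    (ρxx : Mxx →ₗ[k] Mxx ⊗[k] Axx) (o : Axx) : Submodule k Mxx :=
  LinearMap.ker (ρxx - (TensorProduct.mk k Mxx Axx).flip o)

/-- The map `m ↦ m₍₀₎ S(m₍₁₎) ⊗ m₍₂₎`, expressed through the iterated coaction `ρxy` and
the map `θ : m ⊗ a ↦ m · S(a)`. -/
noncomputable def betaMap {k : Type*} [CommRing k] {Mxy Axy Mxx : Type*}
    [AddCommGroup Mxy] [Module k Mxy] [AddCommGroup Axy] [Module k Axy]
    [AddCommGroup Mxx] [Module k Mxx]
    (ρxy : Mxy →ₗ[k] Mxy ⊗[k] Axy) (θ : Mxy ⊗[k] Axy →ₗ[k] Mxx) :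
    Mxy →ₗ[k] Mxx ⊗[k] Axy :=
  (TensorProduct.map θ LinearMap.id) ∘ₗ (TensorProduct.map ρxy LinearMap.id) ∘ₗ ρxy

section Aux
variable {k : Type*} [CommRing k] {X : Type*}
  {A : X → X → Type*} [∀ x y, AddCommGroup (A x y)] [∀ x y, Module k (A x y)]
  (Δ : ∀ x y, A x y →ₗ[k] A x y ⊗[k] A x y)
  (ε : ∀ x y, A x y →ₗ[k] k)
  (mul : ∀ x y z, A x y →ₗ[k] A y z →ₗ[k] A x z)
  (one : ∀ x, A x x)
  (S : ∀ x y, A x y →ₗ[k] A y x)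

/-- Claim 1 : `(Δ∘S) ⋆ Δ = η_y`. -/
lemma claim1 (x y : X)
    (hΔm : ∀ (a : A y x) (b : A x y),
      Δ y y (mul y x y a b)
        = (TensorProduct.map (TensorProduct.lift (mul y x y)) (TensorProduct.lift (mul y x y)))
            ((TensorProduct.tensorTensorTensorComm k (A y x) (A y x) (A x y) (A x y))
              ((Δ y x a) ⊗ₜ[k] (Δ x y b))))
    (hΔ1 : Δ y y (one y) = (one y) ⊗ₜ[k] (one y))
    (hSr : ∀ h : A x y,
      (TensorProduct.lift (mul y x y)) ((TensorProduct.map (S x y) LinearMap.id) (Δ x y h))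
        = ε x y h • one y) :
    (TensorProduct.map (TensorProduct.lift (mul y x y)) (TensorProduct.lift (mul y x y)))
        ∘ₗ (TensorProduct.tensorTensorTensorComm k (A y x) (A y x) (A x y) (A x y)).toLinearMap
        ∘ₗ (TensorProduct.map ((Δ y x) ∘ₗ (S x y)) (Δ x y))
        ∘ₗ (Δ x y)
      = LinearMap.smulRight (ε x y) ((one y) ⊗ₜ[k] (one y)) := by
  have key : (TensorProduct.map (TensorProduct.lift (mul y x y)) (TensorProduct.lift (mul y x y)))
        ∘ₗ (TensorProduct.tensorTensorTensorComm k (A y x) (A y x) (A x y) (A x y)).toLinearMap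
        ∘ₗ (TensorProduct.map ((Δ y x) ∘ₗ (S x y)) (Δ x y))
      = (Δ y y) ∘ₗ (TensorProduct.lift (mul y x y)) ∘ₗ (TensorProduct.map (S x y) LinearMap.id) := by
    ext a b
    simp [hΔm]
  ext a
  have hk := LinearMap.congr_fun key ((Δ x y) a)
  simp only [LinearMap.comp_apply] at hk ⊢
  rw [hk, LinearMap.smulRight_apply, hSr a, map_smul, hΔ1]

/-- Claim 2 : `Δ ⋆ ((S⊗S)∘τ∘Δ) = η_x`. -/
lemma claim2 (x y : X)
    (hco : ∀ a : A x y,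
      (TensorProduct.assoc k (A x y) (A x y) (A x y))
          ((TensorProduct.map (Δ x y) LinearMap.id) (Δ x y a))
        = (TensorProduct.map LinearMap.id (Δ x y)) (Δ x y a))
    (hcr : ∀ a : A x y,
      (TensorProduct.rid k (A x y)) ((TensorProduct.map LinearMap.id (ε x y)) (Δ x y a)) = a)
    (hSl : ∀ h : A x y,
      (TensorProduct.lift (mul x y x)) ((TensorProduct.map LinearMap.id (S x y)) (Δ x y h))
        = ε x y h • one x) :
    (TensorProduct.map (TensorProduct.lift (mul x y x)) (TensorProduct.lift (mul x y x)))
        ∘ₗ (TensorProduct.tensorTensorTensorComm k (A x y) (A x y) (A y x) (A y x)).toLinearMap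
        ∘ₗ (TensorProduct.map (Δ x y)
              ((TensorProduct.map (S x y) (S x y))
                ∘ₗ (TensorProduct.comm k (A x y) (A x y)).toLinearMap ∘ₗ (Δ x y)))
        ∘ₗ (Δ x y)
      = LinearMap.smulRight (ε x y) ((one x) ⊗ₜ[k] (one x)) := by
  set B := A x y with hB
  set ns : B ⊗[k] B →ₗ[k] A x x :=
    (TensorProduct.lift (mul x y x)) ∘ₗ (TensorProduct.map LinearMap.id (S x y)) with hns
  set K : (B ⊗[k] B) ⊗[k] (B ⊗[k] B) →ₗ[k] (A x x) ⊗[k] (A x x) :=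
    (TensorProduct.map ns ns)
      ∘ₗ (TensorProduct.tensorTensorTensorComm k B B B B).toLinearMap
      ∘ₗ (TensorProduct.map LinearMap.id (TensorProduct.comm k B B).toLinearMap) with hK
  set Ξ : (B ⊗[k] (B ⊗[k] B)) ⊗[k] B →ₗ[k] (B ⊗[k] B) ⊗[k] (B ⊗[k] B) :=
    (TensorProduct.assoc k B B (B ⊗[k] B)).symm.toLinearMap
      ∘ₗ (TensorProduct.map LinearMap.id (TensorProduct.assoc k B B B).toLinearMap)
      ∘ₗ (TensorProduct.assoc k B (B ⊗[k] B) B).toLinearMap with hΞ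
  -- step (i): rewrite the LHS through K
  have hKmap : (TensorProduct.map (TensorProduct.lift (mul x y x)) (TensorProduct.lift (mul x y x)))
      ∘ₗ (TensorProduct.tensorTensorTensorComm k B B (A y x) (A y x)).toLinearMap
      ∘ₗ (TensorProduct.map LinearMap.id (TensorProduct.map (S x y) (S x y)))
      = (TensorProduct.map ns ns)
        ∘ₗ (TensorProduct.tensorTensorTensorComm k B B B B).toLinearMap := by
    ext p q u v
    simp [AlgebraTensorModule.curry_apply, curry_apply, LinearMap.coe_restrictScalars, hns]
  have hKC2 : (TensorProduct.map (TensorProduct.lift (mul x y x)) (TensorProduct.lift (mul x y x)))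
      ∘ₗ (TensorProduct.tensorTensorTensorComm k B B (A y x) (A y x)).toLinearMap
      ∘ₗ (TensorProduct.map (Δ x y)
            ((TensorProduct.map (S x y) (S x y))
              ∘ₗ (TensorProduct.comm k B B).toLinearMap ∘ₗ (Δ x y)))
      = K ∘ₗ (TensorProduct.map (Δ x y) (Δ x y)) := by
    ext q r
    have h1 := LinearMap.congr_fun hKmap ((Δ x y q) ⊗ₜ[k] ((TensorProduct.comm k B B) (Δ x y r)))
    simp only [AlgebraTensorModule.curry_apply, curry_apply, LinearMap.coe_restrictScalars,
      LinearMap.comp_apply, map_tmul, LinearMap.id_coe, id_eq, LinearEquiv.coe_coe] at h1 ⊢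
    rw [h1, hK]
    simp
  -- step (ii): the four-fold comultiplication, re-associated
  have hW : Ξ ∘ₗ (TensorProduct.map (TensorProduct.assoc k B B B).toLinearMap LinearMap.id)
      ∘ₗ (TensorProduct.map (TensorProduct.map (Δ x y) LinearMap.id) LinearMap.id)
      ∘ₗ (TensorProduct.assoc k B B B).symm.toLinearMap
      = TensorProduct.map (Δ x y) LinearMap.id := by
    ext p q r
    simp only [AlgebraTensorModule.curry_apply, curry_apply, LinearMap.coe_restrictScalars,
      LinearMap.comp_apply, LinearEquiv.coe_coe, assoc_symm_tmul, map_tmul,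
      LinearMap.id_coe, id_eq]
    generalize (Δ x y) p = t
    induction t using TensorProduct.induction_on with
    | zero => simp [hΞ]
    | tmul a b => simp [hΞ]
    | add s t hs ht => simp only [add_tmul, map_add, hs, ht]
  have hcomap : (TensorProduct.map LinearMap.id (Δ x y)) ∘ₗ (Δ x y)
      = (TensorProduct.assoc k B B B).toLinearMap
          ∘ₗ (TensorProduct.map (Δ x y) LinearMap.id) ∘ₗ (Δ x y) :=
    LinearMap.ext fun a => (hco a).symm
  -- step (iii): contraction of the middle pair
  have hcontr : ∀ (p r : B) (t : B ⊗[k] B),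
      K (Ξ ((p ⊗ₜ[k] t) ⊗ₜ[k] r)) = ns (p ⊗ₜ[k] r) ⊗ₜ[k] ns t := by
    intro p r t
    induction t using TensorProduct.induction_on with
    | zero => simp
    | tmul a b => simp [hΞ, hK]
    | add s t hs ht => simp only [tmul_add, add_tmul, map_add, hs, ht]
  -- now put things together
  ext a
  simp only [LinearMap.comp_apply, LinearMap.smulRight_apply]
  have h0 := LinearMap.congr_fun hKC2 ((Δ x y) a)
  simp only [LinearMap.comp_apply] at h0
  rw [h0]
  -- rewrite the four-fold comultiplication
  have hsplit1 : TensorProduct.map (Δ x y) (Δ x y)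
      = (TensorProduct.map (Δ x y) LinearMap.id) ∘ₗ (TensorProduct.map LinearMap.id (Δ x y)) := by
    ext u v
    simp [AlgebraTensorModule.curry_apply, curry_apply, LinearMap.coe_restrictScalars]
  have hsplit5 : (TensorProduct.map (TensorProduct.assoc k B B B).toLinearMap
        (LinearMap.id : B →ₗ[k] B))
      ∘ₗ (TensorProduct.map (TensorProduct.map (Δ x y) LinearMap.id) (LinearMap.id : B →ₗ[k] B))
      ∘ₗ (TensorProduct.map (Δ x y) (LinearMap.id : B →ₗ[k] B))
      = TensorProduct.map ((TensorProduct.assoc k B B B).toLinearMap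
          ∘ₗ (TensorProduct.map (Δ x y) LinearMap.id) ∘ₗ (Δ x y)) (LinearMap.id : B →ₗ[k] B) := by
    ext u v
    simp [AlgebraTensorModule.curry_apply, curry_apply, LinearMap.coe_restrictScalars]
  have hsplit4 : TensorProduct.map ((TensorProduct.map LinearMap.id (Δ x y)) ∘ₗ (Δ x y))
        (LinearMap.id : B →ₗ[k] B)
      = (TensorProduct.map (TensorProduct.map LinearMap.id (Δ x y)) (LinearMap.id : B →ₗ[k] B))
        ∘ₗ (TensorProduct.map (Δ x y) (LinearMap.id : B →ₗ[k] B)) := by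
    ext u v
    simp [AlgebraTensorModule.curry_apply, curry_apply, LinearMap.coe_restrictScalars]
  have h2 : TensorProduct.map (Δ x y) (Δ x y) ((Δ x y) a)
      = Ξ ((TensorProduct.map (TensorProduct.map LinearMap.id (Δ x y)) LinearMap.id)
            ((TensorProduct.map (Δ x y) LinearMap.id) ((Δ x y) a))) := by
    have e1eq : (TensorProduct.map (Δ x y) LinearMap.id) ((Δ x y) a)
        = (TensorProduct.assoc k B B B).symm
            ((TensorProduct.map LinearMap.id (Δ x y)) ((Δ x y) a)) := by
      rw [← hco a]; exact (LinearEquiv.symm_apply_apply _ _).symm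
    calc TensorProduct.map (Δ x y) (Δ x y) ((Δ x y) a)
        = (TensorProduct.map (Δ x y) LinearMap.id)
            ((TensorProduct.map LinearMap.id (Δ x y)) ((Δ x y) a)) := by
          rw [hsplit1]; simp [LinearMap.comp_apply]
      _ = (Ξ ∘ₗ (TensorProduct.map (TensorProduct.assoc k B B B).toLinearMap LinearMap.id)
            ∘ₗ (TensorProduct.map (TensorProduct.map (Δ x y) LinearMap.id) LinearMap.id)
            ∘ₗ (TensorProduct.assoc k B B B).symm.toLinearMap)
            ((TensorProduct.map LinearMap.id (Δ x y)) ((Δ x y) a)) := by rw [hW]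
      _ = Ξ ((TensorProduct.map (TensorProduct.assoc k B B B).toLinearMap LinearMap.id)
            ((TensorProduct.map (TensorProduct.map (Δ x y) LinearMap.id) LinearMap.id)
              ((TensorProduct.map (Δ x y) LinearMap.id) ((Δ x y) a)))) := by
          simp only [LinearMap.comp_apply, LinearEquiv.coe_coe]
          rw [← e1eq]
      _ = Ξ ((TensorProduct.map ((TensorProduct.map LinearMap.id (Δ x y)) ∘ₗ (Δ x y))
              LinearMap.id) ((Δ x y) a)) := by
          have h5 := LinearMap.congr_fun hsplit5 ((Δ x y) a)
          simp only [LinearMap.comp_apply] at h5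
          rw [h5, ← hcomap]
      _ = Ξ ((TensorProduct.map (TensorProduct.map LinearMap.id (Δ x y)) LinearMap.id)
              ((TensorProduct.map (Δ x y) LinearMap.id) ((Δ x y) a))) := by
          have h6 := LinearMap.congr_fun hsplit4 ((Δ x y) a)
          simp only [LinearMap.comp_apply] at h6
          rw [h6]
  rw [h2]
  -- contract : K ∘ Ξ ∘ (id ⊗ Δ) ⊗ id  applied to e1
  have h3 : ∀ t : (B ⊗[k] B) ⊗[k] B,
      K (Ξ ((TensorProduct.map (TensorProduct.map LinearMap.id (Δ x y)) LinearMap.id) t))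
        = ((TensorProduct.mk k (A x x) (A x x)).flip (one x))
            (ns ((TensorProduct.map
                ((TensorProduct.rid k B).toLinearMap ∘ₗ (TensorProduct.map LinearMap.id (ε x y)))
                LinearMap.id) t)) := by
    intro t
    induction t using TensorProduct.induction_on with
    | zero => simp
    | tmul s r =>
      induction s using TensorProduct.induction_on with
      | zero => simp [zero_tmul]
      | tmul p q =>
        simp only [map_tmul, LinearMap.id_coe, id_eq, LinearMap.comp_apply,
          LinearEquiv.coe_coe, rid_tmul]
        have hnsq : ns ((Δ x y) q) = (ε x y) q • one x := hSl q
        rw [hcontr p r (Δ x y q), hnsq]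
        simp only [mk_apply, LinearMap.flip_apply, tmul_smul, smul_tmul', LinearMap.map_smul]
        conv_rhs => rw [← smul_tmul', map_smul]
      | add s t hs ht => simp only [add_tmul, map_add, hs, ht]
    | add s t hs ht => simp only [map_add, hs, ht]
  rw [h3]
  have h4 : (TensorProduct.map
      ((TensorProduct.rid k B).toLinearMap ∘ₗ (TensorProduct.map LinearMap.id (ε x y)))
      LinearMap.id) ((TensorProduct.map (Δ x y) LinearMap.id) ((Δ x y) a)) = (Δ x y) a := by
    rw [← LinearMap.comp_apply, ← TensorProduct.map_comp]
    have : ((TensorProduct.rid k B).toLinearMap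
        ∘ₗ (TensorProduct.map LinearMap.id (ε x y))) ∘ₗ (Δ x y) = LinearMap.id :=
      LinearMap.ext fun b => by simpa using hcr b
    rw [this]
    simp
  rw [h4]
  have hns' : ns ((Δ x y) a) = (ε x y) a • one x := hSl a
  rw [hns']
  simp [mk_apply, smul_tmul']

lemma antiDelta (x y : X)
    (hco : ∀ a : A x y,
      (TensorProduct.assoc k (A x y) (A x y) (A x y))
          ((TensorProduct.map (Δ x y) LinearMap.id) (Δ x y a))
        = (TensorProduct.map LinearMap.id (Δ x y)) (Δ x y a))
    (hcl : ∀ a : A x y,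
      (TensorProduct.lid k (A x y)) ((TensorProduct.map (ε x y) LinearMap.id) (Δ x y a)) = a)
    (hcr : ∀ a : A x y,
      (TensorProduct.rid k (A x y)) ((TensorProduct.map LinearMap.id (ε x y)) (Δ x y a)) = a)
    (hΔm : ∀ (a : A y x) (b : A x y),
      Δ y y (mul y x y a b)
        = (TensorProduct.map (TensorProduct.lift (mul y x y)) (TensorProduct.lift (mul y x y)))
            ((TensorProduct.tensorTensorTensorComm k (A y x) (A y x) (A x y) (A x y))
              ((Δ y x a) ⊗ₜ[k] (Δ x y b))))
    (hΔ1 : Δ y y (one y) = (one y) ⊗ₜ[k] (one y))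
    (hSl : ∀ h : A x y,
      (TensorProduct.lift (mul x y x)) ((TensorProduct.map LinearMap.id (S x y)) (Δ x y h))
        = ε x y h • one x)
    (hSr : ∀ h : A x y,
      (TensorProduct.lift (mul y x y)) ((TensorProduct.map (S x y) LinearMap.id) (Δ x y h))
        = ε x y h • one y)
    (hma : ∀ (a : A y x) (b : A x y) (c : A y x),
      mul y y x (mul y x y a b) c = mul y x x a (mul x y x b c))
    (h1m : ∀ c : A y x, mul y y x (one y) c = c)
    (hm1 : ∀ c : A y x, mul y x x c (one x) = c) :
    ∀ a : A x y, Δ y x (S x y a)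
      = TensorProduct.map (S x y) (S x y)
          ((TensorProduct.comm k (A x y) (A x y)) (Δ x y a)) := by
  set B := A x y with hB
  set C := A y x with hC
  set F : B →ₗ[k] C ⊗[k] C := (Δ y x) ∘ₗ (S x y) with hF
  set G : B →ₗ[k] C ⊗[k] C :=
    (TensorProduct.map (S x y) (S x y))
      ∘ₗ (TensorProduct.comm k B B).toLinearMap ∘ₗ (Δ x y) with hG
  set C2nd : B ⊗[k] B →ₗ[k] (A x x) ⊗[k] (A x x) :=
    (TensorProduct.map (TensorProduct.lift (mul x y x)) (TensorProduct.lift (mul x y x)))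
      ∘ₗ (TensorProduct.tensorTensorTensorComm k B B C C).toLinearMap
      ∘ₗ (TensorProduct.map (Δ x y) G) with hC2nd
  set C1nd : B ⊗[k] B →ₗ[k] (A y y) ⊗[k] (A y y) :=
    (TensorProduct.map (TensorProduct.lift (mul y x y)) (TensorProduct.lift (mul y x y)))
      ∘ₗ (TensorProduct.tensorTensorTensorComm k C C B B).toLinearMap
      ∘ₗ (TensorProduct.map F (Δ x y)) with hC1nd
  set P1 : (C ⊗[k] C) ⊗[k] ((A x x) ⊗[k] (A x x)) →ₗ[k] C ⊗[k] C :=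
    (TensorProduct.map (TensorProduct.lift (mul y x x)) (TensorProduct.lift (mul y x x)))
      ∘ₗ (TensorProduct.tensorTensorTensorComm k C C (A x x) (A x x)).toLinearMap with hP1
  set P2 : ((A y y) ⊗[k] (A y y)) ⊗[k] (C ⊗[k] C) →ₗ[k] C ⊗[k] C :=
    (TensorProduct.map (TensorProduct.lift (mul y y x)) (TensorProduct.lift (mul y y x)))
      ∘ₗ (TensorProduct.tensorTensorTensorComm k (A y y) (A y y) C C).toLinearMap with hP2
  -- the two convolution-unit identities
  have hQ2 : C2nd ∘ₗ (Δ x y) = LinearMap.smulRight (ε x y) ((one x) ⊗ₜ[k] (one x)) := by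
    have h := claim2 Δ ε mul one S x y hco hcr hSl
    rw [hC2nd, LinearMap.comp_assoc, LinearMap.comp_assoc] at *
    exact h
  have hQ1 : C1nd ∘ₗ (Δ x y) = LinearMap.smulRight (ε x y) ((one y) ⊗ₜ[k] (one y)) := by
    have h := claim1 Δ ε mul one S x y hΔm hΔ1 hSr
    rw [hC1nd, LinearMap.comp_assoc, LinearMap.comp_assoc] at *
    exact h
  -- unit laws
  have hP1unit : ∀ t : C ⊗[k] C, P1 (t ⊗ₜ[k] ((one x) ⊗ₜ[k] (one x))) = t := by
    intro t
    induction t using TensorProduct.induction_on with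
    | zero => simp
    | tmul c c' => simp [hP1, hm1]
    | add s t hs ht => simp only [add_tmul, map_add, hs, ht]
  have hP2unit : ∀ t : C ⊗[k] C, P2 (((one y) ⊗ₜ[k] (one y)) ⊗ₜ[k] t) = t := by
    intro t
    induction t using TensorProduct.induction_on with
    | zero => simp
    | tmul c c' => simp [hP2, h1m]
    | add s t hs ht => simp only [tmul_add, map_add, hs, ht]
  have key1 : P1 ∘ₗ (TensorProduct.map F (LinearMap.smulRight (ε x y) ((one x) ⊗ₜ[k] (one x))))
      = F ∘ₗ (TensorProduct.rid k B).toLinearMap ∘ₗ (TensorProduct.map LinearMap.id (ε x y)) := by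
    ext u b
    simp only [AlgebraTensorModule.curry_apply, curry_apply, LinearMap.coe_restrictScalars,
      LinearMap.comp_apply, map_tmul, LinearMap.smulRight_apply, LinearMap.id_coe, id_eq,
      LinearEquiv.coe_coe, rid_tmul]
    rw [tmul_smul, map_smul, hP1unit (F u), map_smul]
  have key2 : P2 ∘ₗ (TensorProduct.map (LinearMap.smulRight (ε x y) ((one y) ⊗ₜ[k] (one y))) G)
      = G ∘ₗ (TensorProduct.lid k B).toLinearMap ∘ₗ (TensorProduct.map (ε x y) LinearMap.id) := by
    ext b u
    simp only [AlgebraTensorModule.curry_apply, curry_apply, LinearMap.coe_restrictScalars,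
      LinearMap.comp_apply, map_tmul, LinearMap.smulRight_apply, LinearMap.id_coe, id_eq,
      LinearEquiv.coe_coe, lid_tmul]
    rw [← smul_tmul', map_smul, hP2unit (G u), map_smul]
  intro a
  -- the three-fold product, evaluated in two ways
  set t0 : (B ⊗[k] B) ⊗[k] B := (TensorProduct.map (Δ x y) LinearMap.id) (Δ x y a) with ht0
  set u0 : ((C ⊗[k] C) ⊗[k] (B ⊗[k] B)) ⊗[k] (C ⊗[k] C) :=
    (TensorProduct.map (TensorProduct.map F (Δ x y)) G) t0 with hu0
  -- LHS value
  have sEL : P1 ∘ₗ (TensorProduct.map LinearMap.id C2nd) ∘ₗ (TensorProduct.map F LinearMap.id)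
      = (P1 ∘ₗ (TensorProduct.map LinearMap.id
          ((TensorProduct.map (TensorProduct.lift (mul x y x)) (TensorProduct.lift (mul x y x)))
            ∘ₗ (TensorProduct.tensorTensorTensorComm k B B C C).toLinearMap)))
        ∘ₗ (TensorProduct.map F (TensorProduct.map (Δ x y) G)) := by
    ext u v w
    simp [AlgebraTensorModule.curry_apply, curry_apply, LinearMap.coe_restrictScalars, hC2nd]
  have sER : P2 ∘ₗ (TensorProduct.map C1nd LinearMap.id) ∘ₗ (TensorProduct.map LinearMap.id G)
      = (P2 ∘ₗ (TensorProduct.map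
          ((TensorProduct.map (TensorProduct.lift (mul y x y)) (TensorProduct.lift (mul y x y)))
            ∘ₗ (TensorProduct.tensorTensorTensorComm k C C B B).toLinearMap) LinearMap.id))
        ∘ₗ (TensorProduct.map (TensorProduct.map F (Δ x y)) G) := by
    ext u v w
    simp [AlgebraTensorModule.curry_apply, curry_apply, LinearMap.coe_restrictScalars, hC1nd]
  -- associativity of the triple convolution product
  have I3 : (P1 ∘ₗ (TensorProduct.map LinearMap.id
          ((TensorProduct.map (TensorProduct.lift (mul x y x)) (TensorProduct.lift (mul x y x)))
            ∘ₗ (TensorProduct.tensorTensorTensorComm k B B C C).toLinearMap)))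
        ∘ₗ (TensorProduct.assoc k (C ⊗[k] C) (B ⊗[k] B) (C ⊗[k] C)).toLinearMap
      = P2 ∘ₗ (TensorProduct.map
          ((TensorProduct.map (TensorProduct.lift (mul y x y)) (TensorProduct.lift (mul y x y)))
            ∘ₗ (TensorProduct.tensorTensorTensorComm k C C B B).toLinearMap) LinearMap.id) := by
    ext c c' b b' d d'
    simp [AlgebraTensorModule.curry_apply, curry_apply, LinearMap.coe_restrictScalars,
      hP1, hP2, hma]
  -- now the two evaluations agree
  have hmid : P1 ((TensorProduct.map F C2nd) ((TensorProduct.map LinearMap.id (Δ x y)) (Δ x y a)))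
      = P2 ((TensorProduct.map C1nd G) t0) := by
    have e1 : (TensorProduct.map LinearMap.id (Δ x y)) (Δ x y a)
        = (TensorProduct.assoc k B B B) t0 := (hco a).symm
    have split1 : (TensorProduct.map F C2nd)
        = (TensorProduct.map LinearMap.id C2nd) ∘ₗ (TensorProduct.map F LinearMap.id) := by
      ext u v
      simp [AlgebraTensorModule.curry_apply, curry_apply, LinearMap.coe_restrictScalars]
    have split2 : (TensorProduct.map C1nd G)
        = (TensorProduct.map C1nd LinearMap.id) ∘ₗ (TensorProduct.map LinearMap.id G) := by
      ext u v
      simp [AlgebraTensorModule.curry_apply, curry_apply, LinearMap.coe_restrictScalars]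
    have nat1 : (TensorProduct.map F (TensorProduct.map (Δ x y) G))
          ((TensorProduct.assoc k B B B) t0)
        = (TensorProduct.assoc k (C ⊗[k] C) (B ⊗[k] B) (C ⊗[k] C)) u0 := by
      rw [hu0]
      exact TensorProduct.map_map_assoc F (Δ x y) G t0
    rw [e1, split1, split2]
    simp only [LinearMap.comp_apply]
    have l1 := LinearMap.congr_fun sEL ((TensorProduct.assoc k B B B) t0)
    simp only [LinearMap.comp_apply] at l1
    rw [l1, nat1]
    have l3 := LinearMap.congr_fun I3 u0
    simp only [LinearMap.comp_apply, LinearEquiv.coe_coe] at l3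
    rw [l3]
    have l2 := LinearMap.congr_fun sER t0
    simp only [LinearMap.comp_apply] at l2
    rw [← l2]
  -- final computation
  have hL : P1 ((TensorProduct.map F C2nd) ((TensorProduct.map LinearMap.id (Δ x y)) (Δ x y a)))
      = F a := by
    have comb : (TensorProduct.map F C2nd) ∘ₗ (TensorProduct.map LinearMap.id (Δ x y))
        = TensorProduct.map F (C2nd ∘ₗ (Δ x y)) := by
      ext u v
      simp [AlgebraTensorModule.curry_apply, curry_apply, LinearMap.coe_restrictScalars]
    have hc := LinearMap.congr_fun comb (Δ x y a)
    simp only [LinearMap.comp_apply] at hc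
    rw [hc, hQ2]
    have k1 := LinearMap.congr_fun key1 (Δ x y a)
    simp only [LinearMap.comp_apply, LinearEquiv.coe_coe] at k1
    rw [k1, hcr a]
  have hR : P2 ((TensorProduct.map C1nd G) t0) = G a := by
    have comb : (TensorProduct.map C1nd G) ∘ₗ (TensorProduct.map (Δ x y) LinearMap.id)
        = TensorProduct.map (C1nd ∘ₗ (Δ x y)) G := by
      ext u v
      simp [AlgebraTensorModule.curry_apply, curry_apply, LinearMap.coe_restrictScalars]
    have hc := LinearMap.congr_fun comb (Δ x y a)
    simp only [LinearMap.comp_apply] at hc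
    rw [ht0, hc, hQ1]
    have k2 := LinearMap.congr_fun key2 (Δ x y a)
    simp only [LinearMap.comp_apply, LinearEquiv.coe_coe] at k2
    rw [k2, hcl a]
  have : F a = G a := by rw [← hL, hmid, hR]
  simpa [hF, hG] using this
end Aux

section Aux2
variable {k : Type*} [CommRing k] {X : Type*}
  {A : X → X → Type*} [∀ x y, AddCommGroup (A x y)] [∀ x y, Module k (A x y)]
  {M : X → X → Type*} [∀ x y, AddCommGroup (M x y)] [∀ x y, Module k (M x y)]
  (Δ : ∀ x y, A x y →ₗ[k] A x y ⊗[k] A x y)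
  (ε : ∀ x y, A x y →ₗ[k] k)
  (mul : ∀ x y z, A x y →ₗ[k] A y z →ₗ[k] A x z)
  (one : ∀ x, A x x)
  (S : ∀ x y, A x y →ₗ[k] A y x)
  (ψ : ∀ x y z, M x y →ₗ[k] A y z →ₗ[k] M x z)
  (ρ : ∀ x y, M x y →ₗ[k] M x y ⊗[k] A x y)

/-- `m₀ S(m₁)` is a coinvariant. -/
lemma coinvTheta (x y : X)
    (hco : ∀ a : A x y,
      (TensorProduct.assoc k (A x y) (A x y) (A x y))
          ((TensorProduct.map (Δ x y) LinearMap.id) (Δ x y a))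
        = (TensorProduct.map LinearMap.id (Δ x y)) (Δ x y a))
    (hcl : ∀ a : A x y,
      (TensorProduct.lid k (A x y)) ((TensorProduct.map (ε x y) LinearMap.id) (Δ x y a)) = a)
    (hSl : ∀ h : A x y,
      (TensorProduct.lift (mul x y x)) ((TensorProduct.map LinearMap.id (S x y)) (Δ x y h))
        = ε x y h • one x)
    (hAD : ∀ a : A x y, Δ y x (S x y a)
      = TensorProduct.map (S x y) (S x y)
          ((TensorProduct.comm k (A x y) (A x y)) (Δ x y a)))
    (hρco : ∀ m : M x y,
      (TensorProduct.map (ρ x y) LinearMap.id) (ρ x y m)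
        = (TensorProduct.assoc k (M x y) (A x y) (A x y)).symm
            ((TensorProduct.map LinearMap.id (Δ x y)) (ρ x y m)))
    (hρcompat : ∀ (m : M x y) (a : A y x),
      ρ x x (ψ x y x m a)
        = (TensorProduct.map (TensorProduct.lift (ψ x y x)) (TensorProduct.lift (mul x y x)))
            ((TensorProduct.tensorTensorTensorComm k (M x y) (A x y) (A y x) (A y x))
              ((ρ x y m) ⊗ₜ[k] (Δ y x a)))) :
    ∀ m : M x y,
      ρ x x ((TensorProduct.lift (ψ x y x))
          ((TensorProduct.map LinearMap.id (S x y)) (ρ x y m)))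
        = ((TensorProduct.lift (ψ x y x))
            ((TensorProduct.map LinearMap.id (S x y)) (ρ x y m))) ⊗ₜ[k] (one x) := by
  set B := A x y with hB
  set Mxy := M x y with hMxy
  set θ : Mxy ⊗[k] B →ₗ[k] M x x :=
    (TensorProduct.lift (ψ x y x)) ∘ₗ (TensorProduct.map LinearMap.id (S x y)) with hθ
  set ns : B ⊗[k] B →ₗ[k] A x x :=
    (TensorProduct.lift (mul x y x)) ∘ₗ (TensorProduct.map LinearMap.id (S x y)) with hns
  set Gyx : B →ₗ[k] (A y x) ⊗[k] (A y x) :=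
    (TensorProduct.map (S x y) (S x y))
      ∘ₗ (TensorProduct.comm k B B).toLinearMap ∘ₗ (Δ x y) with hGyx
  set P : (Mxy ⊗[k] B) ⊗[k] ((A y x) ⊗[k] (A y x)) →ₗ[k] (M x x) ⊗[k] (A x x) :=
    (TensorProduct.map (TensorProduct.lift (ψ x y x)) (TensorProduct.lift (mul x y x)))
      ∘ₗ (TensorProduct.tensorTensorTensorComm k Mxy B (A y x) (A y x)).toLinearMap with hP
  set Ω : Mxy ⊗[k] ((B ⊗[k] B) ⊗[k] B) →ₗ[k] (M x x) ⊗[k] (A x x) :=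
    P ∘ₗ (TensorProduct.map LinearMap.id
            ((TensorProduct.map (S x y) (S x y)) ∘ₗ (TensorProduct.comm k B B).toLinearMap))
      ∘ₗ (TensorProduct.assoc k Mxy B (B ⊗[k] B)).symm.toLinearMap
      ∘ₗ (TensorProduct.map LinearMap.id (TensorProduct.assoc k B B B).toLinearMap) with hΩ
  intro m
  -- step 1 : ρ ∘ θ as a composite
  have h1 : ρ x x ∘ₗ θ
      = P ∘ₗ (TensorProduct.map (ρ x y) Gyx) := by
    ext n b
    simp only [AlgebraTensorModule.curry_apply, curry_apply, LinearMap.coe_restrictScalars,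
      LinearMap.comp_apply, map_tmul, LinearMap.id_coe, id_eq, lift.tmul, hθ, hGyx, hP,
      LinearEquiv.coe_coe]
    rw [hρcompat n (S x y b), hAD b]
  -- step 2 : split the right factor
  have split1 : (TensorProduct.map (ρ x y) Gyx)
      = (TensorProduct.map LinearMap.id Gyx) ∘ₗ (TensorProduct.map (ρ x y) LinearMap.id) := by
    ext n b
    simp [AlgebraTensorModule.curry_apply, curry_apply, LinearMap.coe_restrictScalars]
  -- step 3 : the big middle identity
  have A1 : P ∘ₗ (TensorProduct.map LinearMap.id Gyx)
        ∘ₗ (TensorProduct.assoc k Mxy B B).symm.toLinearMap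
        ∘ₗ (TensorProduct.map (LinearMap.id : Mxy →ₗ[k] Mxy) (Δ x y))
      = P ∘ₗ (TensorProduct.map LinearMap.id
            ((TensorProduct.map (S x y) (S x y)) ∘ₗ (TensorProduct.comm k B B).toLinearMap))
        ∘ₗ (TensorProduct.assoc k Mxy B (B ⊗[k] B)).symm.toLinearMap
        ∘ₗ (TensorProduct.map (LinearMap.id : Mxy →ₗ[k] Mxy)
              ((TensorProduct.map LinearMap.id (Δ x y)) ∘ₗ (Δ x y))) := by
    ext n b
    simp only [AlgebraTensorModule.curry_apply, curry_apply, LinearMap.coe_restrictScalars,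
      LinearMap.comp_apply, map_tmul, LinearMap.id_coe, id_eq]
    generalize (Δ x y) b = t
    induction t using TensorProduct.induction_on with
    | zero => simp
    | tmul c d => simp [hGyx]
    | add s t hs ht => simp only [map_add, tmul_add, hs, ht]
  have hcomap : (TensorProduct.map LinearMap.id (Δ x y)) ∘ₗ Δ x y
      = (TensorProduct.assoc k B B B).toLinearMap
          ∘ₗ (TensorProduct.map (Δ x y) LinearMap.id) ∘ₗ Δ x y :=
    LinearMap.ext fun a => (hco a).symm
  have A3 : P ∘ₗ (TensorProduct.map LinearMap.id
            ((TensorProduct.map (S x y) (S x y)) ∘ₗ (TensorProduct.comm k B B).toLinearMap))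
        ∘ₗ (TensorProduct.assoc k Mxy B (B ⊗[k] B)).symm.toLinearMap
        ∘ₗ (TensorProduct.map (LinearMap.id : Mxy →ₗ[k] Mxy)
              ((TensorProduct.assoc k B B B).toLinearMap
                ∘ₗ (TensorProduct.map (Δ x y) LinearMap.id) ∘ₗ (Δ x y)))
      = Ω ∘ₗ (TensorProduct.map (LinearMap.id : Mxy →ₗ[k] Mxy)
              ((TensorProduct.map (Δ x y) LinearMap.id) ∘ₗ (Δ x y))) := by
    ext n b
    simp [AlgebraTensorModule.curry_apply, curry_apply, LinearMap.coe_restrictScalars, hΩ]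
  -- step 4 : the contraction
  have hctr : ∀ (n : Mxy) (t : B ⊗[k] B) (d : B),
      Ω (n ⊗ₜ[k] (t ⊗ₜ[k] d)) = θ (n ⊗ₜ[k] d) ⊗ₜ[k] ns t := by
    intro n t d
    induction t using TensorProduct.induction_on with
    | zero => simp
    | tmul c c' => simp [hΩ, hP, hθ, hns]
    | add s t hs ht => simp only [add_tmul, tmul_add, map_add, hs, ht]
  have hfin : Ω ∘ₗ (TensorProduct.map (LinearMap.id : Mxy →ₗ[k] Mxy)
        ((TensorProduct.map (Δ x y) LinearMap.id) ∘ₗ (Δ x y)))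
      = ((TensorProduct.mk k (M x x) (A x x)).flip (one x)) ∘ₗ θ := by
    ext n b
    simp only [AlgebraTensorModule.curry_apply, curry_apply, LinearMap.coe_restrictScalars,
      LinearMap.comp_apply, map_tmul, LinearMap.id_coe, id_eq, mk_apply, LinearMap.flip_apply]
    -- Ω (n ⊗ (map Δ id (Δ b))) = θ (n ⊗ b) ⊗ one x
    have hstep : ∀ t : B ⊗[k] B,
        Ω (n ⊗ₜ[k] ((TensorProduct.map (Δ x y) LinearMap.id) t))
          = (TensorProduct.map (θ ∘ₗ (TensorProduct.mk k Mxy B n))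
                (ns ∘ₗ (Δ x y))) ((TensorProduct.comm k B B) t) := by
      intro t
      induction t using TensorProduct.induction_on with
      | zero => simp
      | tmul c d => simp [hctr n (Δ x y c) d]
      | add s t hs ht => simp only [map_add, tmul_add, hs, ht]
    rw [hstep (Δ x y b)]
    have hnsΔ : (ns ∘ₗ (Δ x y)) = LinearMap.smulRight (ε x y) (one x) :=
      LinearMap.ext fun c => by simpa [hns] using hSl c
    rw [hnsΔ]
    have hlast : ∀ t : B ⊗[k] B,
        (TensorProduct.map (θ ∘ₗ (TensorProduct.mk k Mxy B n))
            (LinearMap.smulRight (ε x y) (one x))) ((TensorProduct.comm k B B) t)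
          = (θ (n ⊗ₜ[k] (TensorProduct.lid k B) ((TensorProduct.map (ε x y) LinearMap.id) t)))
              ⊗ₜ[k] (one x) := by
      intro t
      induction t using TensorProduct.induction_on with
      | zero => simp
      | tmul c d =>
        simp only [LinearEquiv.coe_coe, comm_tmul, map_tmul, LinearMap.comp_apply, mk_apply,
          LinearMap.smulRight_apply, lid_tmul, LinearMap.id_coe, id_eq]
        rw [tmul_smul, tmul_smul, map_smul, smul_tmul']
      | add s t hs ht => simp only [map_add, tmul_add, add_tmul, hs, ht]
    rw [hlast (Δ x y b), hcl b]
  -- assemble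
  show ρ x x (θ (ρ x y m)) = θ (ρ x y m) ⊗ₜ[k] one x
  have total : P ∘ₗ (TensorProduct.map LinearMap.id Gyx)
      ∘ₗ (TensorProduct.assoc k Mxy B B).symm.toLinearMap
      ∘ₗ (TensorProduct.map (LinearMap.id : Mxy →ₗ[k] Mxy) (Δ x y))
      = ((TensorProduct.mk k (M x x) (A x x)).flip (one x)) ∘ₗ θ := by
    rw [A1, hcomap, A3, hfin]
  have e0 := LinearMap.congr_fun h1 (ρ x y m)
  simp only [LinearMap.comp_apply] at e0
  rw [e0]
  have e1 := LinearMap.congr_fun split1 (ρ x y m)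
  simp only [LinearMap.comp_apply] at e1
  rw [e1, hρco m]
  have e2 := LinearMap.congr_fun total (ρ x y m)
  simp only [LinearMap.comp_apply, LinearEquiv.coe_coe] at e2
  rw [e2]
  simp [mk_apply]
/-- `m₍₀₎ S(m₍₁₎) · m₍₂₎ = m`. -/
lemma alphaBeta (x y : X)
    (hρco : ∀ m : M x y,
      (TensorProduct.map (ρ x y) LinearMap.id) (ρ x y m)
        = (TensorProduct.assoc k (M x y) (A x y) (A x y)).symm
            ((TensorProduct.map LinearMap.id (Δ x y)) (ρ x y m)))
    (hρcu : ∀ m : M x y,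
      (TensorProduct.rid k (M x y)) ((TensorProduct.map LinearMap.id (ε x y)) (ρ x y m)) = m)
    (hψa : ∀ (m : M x y) (a : A y x) (b : A x y),
      ψ x x y (ψ x y x m a) b = ψ x y y m (mul y x y a b))
    (hψ1 : ∀ m : M x y, ψ x y y m (one y) = m)
    (hSr : ∀ h : A x y,
      (TensorProduct.lift (mul y x y)) ((TensorProduct.map (S x y) LinearMap.id) (Δ x y h))
        = ε x y h • one y) :
    ∀ m : M x y,
      (TensorProduct.lift (ψ x x y))
        ((TensorProduct.map
            ((TensorProduct.lift (ψ x y x)) ∘ₗ (TensorProduct.map LinearMap.id (S x y)))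
            LinearMap.id)
          ((TensorProduct.map (ρ x y) LinearMap.id) (ρ x y m))) = m := by
  intro m
  rw [hρco m]
  have s2 : (TensorProduct.lift (ψ x x y)) ∘ₗ (TensorProduct.map
        ((TensorProduct.lift (ψ x y x)) ∘ₗ (TensorProduct.map LinearMap.id (S x y)))
        LinearMap.id) ∘ₗ (TensorProduct.assoc k (M x y) (A x y) (A x y)).symm.toLinearMap
      = (TensorProduct.lift (ψ x y y)) ∘ₗ (TensorProduct.map LinearMap.id
          ((TensorProduct.lift (mul y x y)) ∘ₗ (TensorProduct.map (S x y) LinearMap.id))) := by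
    ext n c d
    simp [AlgebraTensorModule.curry_apply, curry_apply, LinearMap.coe_restrictScalars, hψa]
  have s3 : (TensorProduct.map (LinearMap.id : M x y →ₗ[k] M x y)
        ((TensorProduct.lift (mul y x y)) ∘ₗ (TensorProduct.map (S x y) LinearMap.id)))
        ∘ₗ (TensorProduct.map LinearMap.id (Δ x y))
      = TensorProduct.map LinearMap.id (LinearMap.smulRight (ε x y) (one y)) := by
    ext n b
    simp only [AlgebraTensorModule.curry_apply, curry_apply, LinearMap.coe_restrictScalars,
      LinearMap.comp_apply, map_tmul, LinearMap.id_coe, id_eq, LinearMap.smulRight_apply]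
    rw [hSr b]
  have s4 : (TensorProduct.lift (ψ x y y)) ∘ₗ (TensorProduct.map (LinearMap.id : M x y →ₗ[k] M x y)
        (LinearMap.smulRight (ε x y) (one y)))
      = (TensorProduct.rid k (M x y)).toLinearMap ∘ₗ (TensorProduct.map LinearMap.id (ε x y)) := by
    ext n b
    simp [AlgebraTensorModule.curry_apply, curry_apply, LinearMap.coe_restrictScalars,
      tmul_smul, hψ1]
  have e2 := LinearMap.congr_fun s2 ((TensorProduct.map LinearMap.id (Δ x y)) (ρ x y m))
  simp only [LinearMap.comp_apply, LinearEquiv.coe_coe] at e2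
  rw [e2]
  have e3 := LinearMap.congr_fun s3 (ρ x y m)
  simp only [LinearMap.comp_apply] at e3
  rw [e3]
  have e4 := LinearMap.congr_fun s4 (ρ x y m)
  simp only [LinearMap.comp_apply, LinearEquiv.coe_coe] at e4
  rw [e4, hρcu m]

/-- coaction on `ψ m₀ a` for a coinvariant `m₀`. -/
lemma psiRho (x y : X) (m₀ : M x x)
    (hm : ρ x x m₀ = m₀ ⊗ₜ[k] (one x))
    (h1m : ∀ a : A x y, mul x x y (one x) a = a)
    (hρcompat : ∀ (m : M x x) (a : A x y),
      ρ x y (ψ x x y m a)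
        = (TensorProduct.map (TensorProduct.lift (ψ x x y)) (TensorProduct.lift (mul x x y)))
            ((TensorProduct.tensorTensorTensorComm k (M x x) (A x x) (A x y) (A x y))
              ((ρ x x m) ⊗ₜ[k] (Δ x y a)))) :
    ∀ a : A x y, ρ x y (ψ x x y m₀ a)
      = (TensorProduct.map (ψ x x y m₀) LinearMap.id) (Δ x y a) := by
  intro a
  rw [hρcompat m₀ a, hm]
  have key : ∀ t : (A x y) ⊗[k] (A x y),
      (TensorProduct.map (TensorProduct.lift (ψ x x y)) (TensorProduct.lift (mul x x y)))
          ((TensorProduct.tensorTensorTensorComm k (M x x) (A x x) (A x y) (A x y))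
            ((m₀ ⊗ₜ[k] (one x)) ⊗ₜ[k] t))
        = (TensorProduct.map (ψ x x y m₀) LinearMap.id) t := by
    intro t
    induction t using TensorProduct.induction_on with
    | zero => simp
    | tmul c d => simp [h1m]
    | add s t hs ht => simp only [tmul_add, map_add, hs, ht]
  exact key (Δ x y a)

/-- `θ (ρ (ψ m₀ a)) = ε a • m₀` for a coinvariant `m₀`. -/
lemma thetaOnPsi (x y : X) (m₀ : M x x)
    (hm : ρ x x m₀ = m₀ ⊗ₜ[k] (one x))
    (h1m : ∀ a : A x y, mul x x y (one x) a = a)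
    (hρcompat : ∀ (m : M x x) (a : A x y),
      ρ x y (ψ x x y m a)
        = (TensorProduct.map (TensorProduct.lift (ψ x x y)) (TensorProduct.lift (mul x x y)))
            ((TensorProduct.tensorTensorTensorComm k (M x x) (A x x) (A x y) (A x y))
              ((ρ x x m) ⊗ₜ[k] (Δ x y a))))
    (hψa : ∀ (c : A x y) (d : A y x),
      ψ x y x (ψ x x y m₀ c) d = ψ x x x m₀ (mul x y x c d))
    (hψ1x : ψ x x x m₀ (one x) = m₀)
    (hSl : ∀ h : A x y,
      (TensorProduct.lift (mul x y x)) ((TensorProduct.map LinearMap.id (S x y)) (Δ x y h))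
        = ε x y h • one x) :
    ∀ a : A x y,
      ((TensorProduct.lift (ψ x y x)) ∘ₗ (TensorProduct.map LinearMap.id (S x y)))
          (ρ x y (ψ x x y m₀ a))
        = ε x y a • m₀ := by
  intro a
  rw [psiRho Δ mul one ψ ρ x y m₀ hm h1m hρcompat a]
  have key : ((TensorProduct.lift (ψ x y x)) ∘ₗ (TensorProduct.map LinearMap.id (S x y)))
      ∘ₗ (TensorProduct.map (ψ x x y m₀) LinearMap.id)
      = (ψ x x x m₀) ∘ₗ (TensorProduct.lift (mul x y x))
          ∘ₗ (TensorProduct.map LinearMap.id (S x y)) := by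
    ext c d
    simp [AlgebraTensorModule.curry_apply, curry_apply, LinearMap.coe_restrictScalars, hψa]
  have e := LinearMap.congr_fun key (Δ x y a)
  simp only [LinearMap.comp_apply] at e ⊢
  rw [e, hSl a, map_smul, hψ1x]

/-- `(smulRight ε v ⊗ id) (Δ a) = v ⊗ a`. -/
lemma smulRightMapDelta (x y : X) {V : Type*} [AddCommGroup V] [Module k V] (v : V)
    (hcl : ∀ a : A x y,
      (TensorProduct.lid k (A x y)) ((TensorProduct.map (ε x y) LinearMap.id) (Δ x y a)) = a) :
    ∀ a : A x y,
      (TensorProduct.map (LinearMap.smulRight (ε x y) v) LinearMap.id) (Δ x y a)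
        = v ⊗ₜ[k] a := by
  intro a
  have key : (TensorProduct.map (LinearMap.smulRight (ε x y) v) LinearMap.id)
      = (TensorProduct.mk k V (A x y) v) ∘ₗ (TensorProduct.lid k (A x y)).toLinearMap
        ∘ₗ (TensorProduct.map (ε x y) LinearMap.id) := by
    ext c d
    simp only [AlgebraTensorModule.curry_apply, curry_apply, LinearMap.coe_restrictScalars,
      LinearMap.comp_apply, map_tmul, LinearMap.smulRight_apply, LinearMap.id_coe, id_eq,
      LinearEquiv.coe_coe, lid_tmul, mk_apply]
    rw [tmul_smul, smul_tmul']
  rw [key]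
  simp only [LinearMap.comp_apply, LinearEquiv.coe_coe]
  rw [hcl a]
  rfl
end Aux2

theorem hopf_module_fundamental_isomorphism
    {k : Type*} [CommRing k] {X : Type*}
    (A : X → X → Type*)
    [∀ x y, AddCommGroup (A x y)] [∀ x y, Module k (A x y)]
    (Δ : ∀ x y, A x y →ₗ[k] A x y ⊗[k] A x y)
    (ε : ∀ x y, A x y →ₗ[k] k)
    (mul : ∀ x y z, A x y →ₗ[k] A y z →ₗ[k] A x z)
    (one : ∀ x, A x x)
    (coassoc : ∀ x y (a : A x y),
      (TensorProduct.assoc k (A x y) (A x y) (A x y))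
          ((TensorProduct.map (Δ x y) LinearMap.id) (Δ x y a))
        = (TensorProduct.map LinearMap.id (Δ x y)) (Δ x y a))
    (counit_left : ∀ x y (a : A x y),
      (TensorProduct.lid k (A x y)) ((TensorProduct.map (ε x y) LinearMap.id) (Δ x y a)) = a)
    (counit_right : ∀ x y (a : A x y),
      (TensorProduct.rid k (A x y)) ((TensorProduct.map LinearMap.id (ε x y)) (Δ x y a)) = a)
    (mul_assoc' : ∀ x y z w (a : A x y) (b : A y z) (c : A z w),
      mul x z w (mul x y z a b) c = mul x y w a (mul y z w b c))
    (one_mul' : ∀ x y (a : A x y), mul x x y (one x) a = a)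
    (mul_one' : ∀ x y (a : A x y), mul x y y a (one y) = a)
    (Δ_mul : ∀ x y z (a : A x y) (b : A y z),
      Δ x z (mul x y z a b)
        = (TensorProduct.map (TensorProduct.lift (mul x y z)) (TensorProduct.lift (mul x y z)))
            ((TensorProduct.tensorTensorTensorComm k (A x y) (A x y) (A y z) (A y z))
              ((Δ x y a) ⊗ₜ[k] (Δ y z b))))
    (ε_mul : ∀ x y z (a : A x y) (b : A y z),
      ε x z (mul x y z a b) = ε x y a * ε y z b)
    (Δ_one : ∀ x, Δ x x (one x) = (one x) ⊗ₜ[k] (one x))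
    (ε_one : ∀ x, ε x x (one x) = 1)
    (S : ∀ x y, A x y →ₗ[k] A y x)
    (S_left : ∀ x y (h : A x y),
      (TensorProduct.lift (mul x y x)) ((TensorProduct.map LinearMap.id (S x y)) (Δ x y h))
        = ε x y h • one x)
    (S_right : ∀ x y (h : A x y),
      (TensorProduct.lift (mul y x y)) ((TensorProduct.map (S x y) LinearMap.id) (Δ x y h))
        = ε x y h • one y)
    (M : X → X → Type*)
    [∀ x y, AddCommGroup (M x y)] [∀ x y, Module k (M x y)]
    (ψ : ∀ x y z, M x y →ₗ[k] A y z →ₗ[k] M x z)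
    (ψ_assoc : ∀ x y z w (m : M x y) (a : A y z) (b : A z w),
      ψ x z w (ψ x y z m a) b = ψ x y w m (mul y z w a b))
    (ψ_one : ∀ x y (m : M x y), ψ x y y m (one y) = m)
    (ρ : ∀ x y, M x y →ₗ[k] M x y ⊗[k] A x y)
    (ρ_coassoc : ∀ x y (m : M x y),
      (TensorProduct.map (ρ x y) LinearMap.id) (ρ x y m)
        = (TensorProduct.assoc k (M x y) (A x y) (A x y)).symm
            ((TensorProduct.map LinearMap.id (Δ x y)) (ρ x y m)))
    (ρ_counit : ∀ x y (m : M x y),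
      (TensorProduct.rid k (M x y)) ((TensorProduct.map LinearMap.id (ε x y)) (ρ x y m)) = m)
    (ρ_compat : ∀ x y z (m : M x y) (a : A y z),
      ρ x z (ψ x y z m a)
        = (TensorProduct.map (TensorProduct.lift (ψ x y z)) (TensorProduct.lift (mul x y z)))
            ((TensorProduct.tensorTensorTensorComm k (M x y) (A x y) (A y z) (A y z))
              ((ρ x y m) ⊗ₜ[k] (Δ y z a))))
 :
    ∀ x y,
      Function.Bijective
          (TensorProduct.lift ((ψ x x y) ∘ₗ (coinv (ρ x x) (one x)).subtype))
        ∧ (∀ (m : ↥(coinv (ρ x x) (one x))) (a : A x y),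
            betaMap (ρ x y) ((TensorProduct.lift (ψ x y x)) ∘ₗ (TensorProduct.map LinearMap.id (S x y)))
                (ψ x x y (m : M x x) a)
              = (m : M x x) ⊗ₜ[k] a)
        ∧ (∀ m : M x y,
            (TensorProduct.lift (ψ x x y))
                (betaMap (ρ x y) ((TensorProduct.lift (ψ x y x)) ∘ₗ (TensorProduct.map LinearMap.id (S x y))) m)
              = m) := by
  
  intro x y
  have hAD := antiDelta Δ ε mul one S x y (coassoc x y) (counit_left x y) (counit_right x y)
    (Δ_mul y x y) (Δ_one y) (S_left x y) (S_right x y)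
    (fun a b c => mul_assoc' y x y x a b c) (one_mul' y x) (mul_one' y x)
  have hcoinv := coinvTheta Δ ε mul one S ψ ρ x y (coassoc x y) (counit_left x y)
    (S_left x y) hAD (ρ_coassoc x y) (ρ_compat x y x)
  set θf : (M x y) ⊗[k] (A x y) →ₗ[k] M x x :=
    (TensorProduct.lift (ψ x y x)) ∘ₗ (TensorProduct.map LinearMap.id (S x y)) with hθf
  have hmem : ∀ m : M x y, θf (ρ x y m) ∈ coinv (ρ x x) (one x) := by
    intro m
    simp only [coinv, LinearMap.mem_ker, LinearMap.sub_apply, LinearMap.flip_apply]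
    rw [sub_eq_zero]
    exact hcoinv m
  set γ : M x y →ₗ[k] ↥(coinv (ρ x x) (one x)) :=
    LinearMap.codRestrict (coinv (ρ x x) (one x)) (θf ∘ₗ ρ x y)
      (fun m => by simpa using hmem m) with hγ
  have hγcoe : ∀ m : M x y, ((γ m : ↥(coinv (ρ x x) (one x))) : M x x) = θf (ρ x y m) :=
    fun m => rfl
  have hcm : ∀ m : ↥(coinv (ρ x x) (one x)), ρ x x (m : M x x) = (m : M x x) ⊗ₜ[k] one x := by
    intro m
    have h2 := m.2
    simp only [coinv, LinearMap.mem_ker, LinearMap.sub_apply, LinearMap.flip_apply] at h2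
    rw [sub_eq_zero] at h2
    exact h2
  -- inverse identity on pure tensors, `coinv`-valued
  have hβαpure : ∀ (m : ↥(coinv (ρ x x) (one x))) (a : A x y),
      (TensorProduct.map γ LinearMap.id) (ρ x y (ψ x x y (m : M x x) a)) = m ⊗ₜ[k] a := by
    intro m a
    rw [psiRho Δ mul one ψ ρ x y (m : M x x) (hcm m) (one_mul' x y) (ρ_compat x x y) a]
    have hth := thetaOnPsi Δ ε mul one S ψ ρ x y (m : M x x) (hcm m) (one_mul' x y)
      (ρ_compat x x y) (fun c d => ψ_assoc x x y x (m : M x x) c d) (ψ_one x x (m : M x x))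
      (S_left x y)
    have hchain : ∀ t : (A x y) ⊗[k] (A x y),
        (TensorProduct.map γ LinearMap.id)
            ((TensorProduct.map (ψ x x y (m : M x x)) LinearMap.id) t)
          = (TensorProduct.map (LinearMap.smulRight (ε x y) m) LinearMap.id) t := by
      intro t
      induction t using TensorProduct.induction_on with
      | zero => simp
      | tmul c d =>
        simp only [map_tmul, LinearMap.id_coe, id_eq, LinearMap.smulRight_apply]
        congr 1
        apply Subtype.ext
        simp only [Submodule.coe_smul]
        rw [hγcoe, hth c]
      | add s t hs ht => simp only [map_add, hs, ht]
    rw [hchain (Δ x y a)]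
    exact smulRightMapDelta Δ ε x y m (counit_left x y) a
  -- the θ-valued inverse identity on pure tensors
  have hβαθ : ∀ (m : ↥(coinv (ρ x x) (one x))) (a : A x y),
      (TensorProduct.map θf LinearMap.id)
          ((TensorProduct.map (ρ x y) LinearMap.id) (ρ x y (ψ x x y (m : M x x) a)))
        = (m : M x x) ⊗ₜ[k] a := by
    intro m a
    rw [psiRho Δ mul one ψ ρ x y (m : M x x) (hcm m) (one_mul' x y) (ρ_compat x x y) a]
    have hth := thetaOnPsi Δ ε mul one S ψ ρ x y (m : M x x) (hcm m) (one_mul' x y)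
      (ρ_compat x x y) (fun c d => ψ_assoc x x y x (m : M x x) c d) (ψ_one x x (m : M x x))
      (S_left x y)
    have hchain : ∀ t : (A x y) ⊗[k] (A x y),
        (TensorProduct.map θf LinearMap.id)
            ((TensorProduct.map (ρ x y) LinearMap.id)
              ((TensorProduct.map (ψ x x y (m : M x x)) LinearMap.id) t))
          = (TensorProduct.map (LinearMap.smulRight (ε x y) (m : M x x)) LinearMap.id) t := by
      intro t
      induction t using TensorProduct.induction_on with
      | zero => simp
      | tmul c d =>
        simp only [map_tmul, LinearMap.id_coe, id_eq, LinearMap.smulRight_apply]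
        congr 1
        exact hth c
      | add s t hs ht => simp only [map_add, hs, ht]
    rw [hchain (Δ x y a)]
    exact smulRightMapDelta Δ ε x y (m : M x x) (counit_left x y) a
  -- the `α ∘ β = id` identity
  have hαβ : ∀ m : M x y,
      (TensorProduct.lift (ψ x x y))
          ((TensorProduct.map θf LinearMap.id)
            ((TensorProduct.map (ρ x y) LinearMap.id) (ρ x y m))) = m := by
    intro m
    exact alphaBeta Δ ε mul one S ψ ρ x y (ρ_coassoc x y) (ρ_counit x y)
      (fun m' a b => ψ_assoc x y x y m' a b) (ψ_one x y) (S_right x y) m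
  refine ⟨⟨?_, ?_⟩, ?_, ?_⟩
  · -- injectivity
    have hleft : ∀ t : ↥(coinv (ρ x x) (one x)) ⊗[k] (A x y),
        (TensorProduct.map γ LinearMap.id)
            (ρ x y ((TensorProduct.lift
              ((ψ x x y) ∘ₗ (coinv (ρ x x) (one x)).subtype)) t)) = t := by
      have hmapeq : (TensorProduct.map γ LinearMap.id) ∘ₗ (ρ x y)
          ∘ₗ (TensorProduct.lift ((ψ x x y) ∘ₗ (coinv (ρ x x) (one x)).subtype))
          = LinearMap.id := by
        ext m a
        simp only [AlgebraTensorModule.curry_apply, curry_apply,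
          LinearMap.coe_restrictScalars, LinearMap.comp_apply, lift.tmul,
          LinearMap.id_coe, id_eq, Submodule.coe_subtype]
        exact hβαpure m a
      intro t
      have := LinearMap.congr_fun hmapeq t
      simpa only [LinearMap.comp_apply, LinearMap.id_coe, id_eq] using this
    intro u v huv
    have h1 := congrArg (fun w => (TensorProduct.map γ LinearMap.id) (ρ x y w)) huv
    simpa only [hleft u, hleft v] using h1
  · -- surjectivity
    intro v
    refine ⟨(TensorProduct.map γ LinearMap.id) (ρ x y v), ?_⟩
    have hsplit : ∀ t : (M x y) ⊗[k] (A x y),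
        (TensorProduct.lift ((ψ x x y) ∘ₗ (coinv (ρ x x) (one x)).subtype))
            ((TensorProduct.map γ LinearMap.id) t)
          = (TensorProduct.lift (ψ x x y))
              ((TensorProduct.map θf LinearMap.id)
                ((TensorProduct.map (ρ x y) LinearMap.id) t)) := by
      intro t
      induction t using TensorProduct.induction_on with
      | zero => simp
      | tmul n b =>
        simp only [map_tmul, lift.tmul, LinearMap.comp_apply, LinearMap.id_coe, id_eq,
          Submodule.coe_subtype]
        rw [hγcoe]
      | add s t hs ht => simp only [map_add, hs, ht]
    rw [hsplit (ρ x y v)]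
    exact hαβ v
  · -- the explicit inverse formula on `ψ m a`
    intro m a
    simp only [betaMap, LinearMap.comp_apply]
    exact hβαθ m a
  · -- β is a section of the action map
    intro m
    simp only [betaMap, LinearMap.comp_apply]
    exact hαβ m
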